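/- Let C be a finite subset of the unit sphere S³ ⊆ ℝ⁴ such that any two distinct points c, c' ∈ C satisfy ⟨c, c'⟩ ≤ 1/6. Then C has at most 10 elements. -/

import Mathlib

open scoped RealInnerProductSpace
open Finset

noncomputable def phi4 (c : EuclideanSpace ℝ (Fin 4)) : EuclideanSpace ℝ (Fin 4 × Fin 4) :=
  (WithLp.equiv 2 _).symm (fun p => c p.1 * c p.2 - if p.1 = p.2 then 1/4 else 0)

noncomputable def psi4 (c : EuclideanSpace ℝ (Fin 4)) :
    EuclideanSpace ℝ (Fin 4 × Fin 4 × Fin 4) :=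
  (WithLp.equiv 2 _).symm (fun p => c p.1 * c p.2.1 * c p.2.2
    - (1/6) * ((if p.2.1 = p.2.2 then c p.1 else 0)
             + (if p.1 = p.2.2 then c p.2.1 else 0)
             + (if p.1 = p.2.1 then c p.2.2 else 0)))

lemma inner_phi4 (c c' : EuclideanSpace ℝ (Fin 4)) (hc : ‖c‖ = 1) (hc' : ‖c'‖ = 1) :
    ⟪phi4 c, phi4 c'⟫ = ⟪c, c'⟫ ^ 2 - 1/4 := by
  have h1 : (∑ i, c i * c i) = 1 := by
    have := real_inner_self_eq_norm_sq c
    rw [hc] at this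
    rw [PiLp.inner_apply] at this
    simpa [RCLike.inner_apply, ← pow_two] using this
  have h2 : (∑ i, c' i * c' i) = 1 := by
    have := real_inner_self_eq_norm_sq c'
    rw [hc'] at this
    rw [PiLp.inner_apply] at this
    simpa [RCLike.inner_apply, ← pow_two] using this
  simp only [phi4, PiLp.inner_apply, RCLike.inner_apply, conj_trivial,
    WithLp.equiv_symm_apply, WithLp.ofLp_toLp, Fintype.sum_prod_type, Fin.sum_univ_four, Fin.reduceEq,
    if_true, if_false] at *
  linear_combination (-(1/4) : ℝ) * h1 + (-(1/4) : ℝ) * h2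

lemma inner_psi4 (c c' : EuclideanSpace ℝ (Fin 4)) (hc : ‖c‖ = 1) (hc' : ‖c'‖ = 1) :
    ⟪psi4 c, psi4 c'⟫ = ⟪c, c'⟫ ^ 3 - ⟪c, c'⟫ / 2 := by
  have h1 : (∑ i, c i * c i) = 1 := by
    have := real_inner_self_eq_norm_sq c
    rw [hc] at this
    rw [PiLp.inner_apply] at this
    simpa [RCLike.inner_apply, ← pow_two] using this
  have h2 : (∑ i, c' i * c' i) = 1 := by
    have := real_inner_self_eq_norm_sq c'
    rw [hc'] at this
    rw [PiLp.inner_apply] at this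
    simpa [RCLike.inner_apply, ← pow_two] using this
  simp only [PiLp.inner_apply, RCLike.inner_apply, conj_trivial, Fin.sum_univ_four] at h1 h2
  simp only [psi4, PiLp.inner_apply, RCLike.inner_apply, conj_trivial,
    WithLp.equiv_symm_apply, WithLp.ofLp_toLp, Fintype.sum_prod_type, Fin.sum_univ_four, Fin.reduceEq,
    if_true, if_false]
  linear_combination (-(1/2) : ℝ) * (c 0 * c' 0 + c 1 * c' 1 + c 2 * c' 2 + c 3 * c' 3) * h1
    + (-(1/2) : ℝ) * (c 0 * c' 0 + c 1 * c' 1 + c 2 * c' 2 + c 3 * c' 3) * h2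

theorem card_le_ten_of_inner_le_one_sixth
    (C : Finset (EuclideanSpace ℝ (Fin 4)))
    (hunit : ∀ c ∈ C, ‖c‖ = 1)
    (hinner : ∀ c ∈ C, ∀ c' ∈ C, c ≠ c' → ⟪c, c'⟫ ≤ (1 / 6 : ℝ)) :
    C.card ≤ 10 := by
  set N : ℕ := C.card with hN
  -- positive semidefiniteness of the three kernels
  have hA : (0:ℝ) ≤ ∑ c ∈ C, ∑ c' ∈ C, ⟪c, c'⟫ := by
    have : ∑ c ∈ C, ∑ c' ∈ C, ⟪c, c'⟫ = ⟪∑ c ∈ C, c, ∑ c ∈ C, c⟫ := by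
      rw [sum_inner]
      exact Finset.sum_congr rfl fun c _ => (inner_sum _ _ _).symm
    rw [this]
    exact real_inner_self_nonneg
  have hB : (0:ℝ) ≤ ∑ c ∈ C, ∑ c' ∈ C, (⟪c, c'⟫ ^ 2 - 1/4) := by
    have : ∑ c ∈ C, ∑ c' ∈ C, (⟪c, c'⟫ ^ 2 - 1/4)
        = ⟪∑ c ∈ C, phi4 c, ∑ c ∈ C, phi4 c⟫ := by
      rw [sum_inner]
      refine Finset.sum_congr rfl fun c hc => ?_
      rw [inner_sum]
      exact Finset.sum_congr rfl fun c' hc' =>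
        (inner_phi4 c c' (hunit c hc) (hunit c' hc')).symm
    rw [this]
    exact real_inner_self_nonneg
  have hD : (0:ℝ) ≤ ∑ c ∈ C, ∑ c' ∈ C, (⟪c, c'⟫ ^ 3 - ⟪c, c'⟫ / 2) := by
    have : ∑ c ∈ C, ∑ c' ∈ C, (⟪c, c'⟫ ^ 3 - ⟪c, c'⟫ / 2)
        = ⟪∑ c ∈ C, psi4 c, ∑ c ∈ C, psi4 c⟫ := by
      rw [sum_inner]
      refine Finset.sum_congr rfl fun c hc => ?_
      rw [inner_sum]
      exact Finset.sum_congr rfl fun c' hc' =>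
        (inner_psi4 c c' (hunit c hc) (hunit c' hc')).symm
    rw [this]
    exact real_inner_self_nonneg
  -- the LP polynomial
  set f : ℝ → ℝ := fun x => (x - 1/6) * (x + 7/10)^2 with hf
  -- lower bound on ∑∑ f
  have hlow : (17/75 : ℝ) * (N:ℝ)^2 ≤ ∑ c ∈ C, ∑ c' ∈ C, f ⟪c, c'⟫ := by
    have expand : ∑ c ∈ C, ∑ c' ∈ C, f ⟪c, c'⟫
        = (∑ c ∈ C, ∑ c' ∈ C, (⟪c, c'⟫ ^ 3 - ⟪c, c'⟫ / 2))
          + (37/30) * (∑ c ∈ C, ∑ c' ∈ C, (⟪c, c'⟫ ^ 2 - 1/4))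
          + (227/300) * (∑ c ∈ C, ∑ c' ∈ C, ⟪c, c'⟫)
          + (17/75) * (N:ℝ)^2 := by
      have hcount : ∑ c ∈ C, ∑ c' ∈ C, (17/75 : ℝ) = (17/75) * (N:ℝ)^2 := by
        simp [Finset.sum_const, hN]
        ring
      calc ∑ c ∈ C, ∑ c' ∈ C, f ⟪c, c'⟫
          = ∑ c ∈ C, ∑ c' ∈ C, ((⟪c, c'⟫ ^ 3 - ⟪c, c'⟫ / 2)
            + (37/30) * (⟪c, c'⟫ ^ 2 - 1/4) + (227/300) * ⟪c, c'⟫ + 17/75) := by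
            refine Finset.sum_congr rfl fun c _ => Finset.sum_congr rfl fun c' _ => ?_
            simp only [hf]
            ring
        _ = _ := by
            simp only [Finset.sum_add_distrib, ← Finset.mul_sum, hcount]
    rw [expand]
    linarith
  -- upper bound on ∑∑ f
  have hup : ∑ c ∈ C, ∑ c' ∈ C, f ⟪c, c'⟫ ≤ (289/120 : ℝ) * (N:ℝ) := by
    have key : ∀ c ∈ C, ∑ c' ∈ C, f ⟪c, c'⟫ ≤ (289/120 : ℝ) := by
      intro c hc
      classical
      rw [← Finset.add_sum_erase _ _ hc]
      have hself : f ⟪c, c⟫ = 289/120 := by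
        have : ⟪c, c⟫ = (1:ℝ) := by
          rw [real_inner_self_eq_norm_sq, hunit c hc]; norm_num
        rw [this, hf]; norm_num
      have hrest : ∑ c' ∈ C.erase c, f ⟪c, c'⟫ ≤ 0 := by
        apply Finset.sum_nonpos
        intro c' hc'
        have hne : c ≠ c' := (Finset.ne_of_mem_erase hc').symm
        have hle : ⟪c, c'⟫ ≤ (1/6 : ℝ) :=
          hinner c hc c' (Finset.mem_of_mem_erase hc') hne
        have : ⟪c, c'⟫ - 1/6 ≤ 0 := by linarith
        exact mul_nonpos_of_nonpos_of_nonneg this (sq_nonneg _)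
      linarith [hself, hrest]
    calc ∑ c ∈ C, ∑ c' ∈ C, f ⟪c, c'⟫ ≤ ∑ c ∈ C, (289/120 : ℝ) :=
          Finset.sum_le_sum key
      _ = (289/120 : ℝ) * (N:ℝ) := by simp [hN]; ring
  -- finish
  by_contra h
  push_neg at h
  have h11 : (11:ℝ) ≤ (N:ℝ) := by exact_mod_cast h
  nlinarith [hlow, hup]
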